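/- Fix σ > 0 and c > 2. Then sup over all y ∈ ℝ with |y| ≥ √(c σ² log(1/τ)) of |T_τ(y) − y| tends to 0 as τ ↓ 0; that is, for every ε > 0 there exists τ₀ ∈ (0,1) such that for all τ ∈ (0, τ₀) and all y with |y| ≥ √(c σ² log(1/τ)), one has |T_τ(y) − y| ≤ ε. -/

import Mathlib

open MeasureTheory ProbabilityTheory Real Filter Set
open intervalIntegral

/-- The integral `I_k(y) = ∫₀¹ z^k (τ² + (1−τ²)z)⁻¹ exp(y² z/(2σ²)) dz`. -/
noncomputable def hsI (σ τ k y : ℝ) : ℝ :=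
  ∫ z in (0:ℝ)..1, z ^ k * (τ ^ 2 + (1 - τ ^ 2) * z)⁻¹ * Real.exp (y ^ 2 * z / (2 * σ ^ 2))

/-- The horseshoe estimator `T_τ(y) = y · I_{1/2}(y)/I_{−1/2}(y)`. -/
noncomputable def hsT (σ τ y : ℝ) : ℝ :=
  y * hsI σ τ (1/2) y / hsI σ τ (-(1/2)) y

/-- The horseshoe posterior variance
`V_τ(y) = σ² I_{1/2}/I_{−1/2} + y² (I_{3/2}/I_{−1/2} − (I_{1/2}/I_{−1/2})²)`. -/
noncomputable def hsV (σ τ y : ℝ) : ℝ :=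
  σ ^ 2 * (hsI σ τ (1/2) y / hsI σ τ (-(1/2)) y)
    + y ^ 2 * (hsI σ τ (3/2) y / hsI σ τ (-(1/2)) y
        - (hsI σ τ (1/2) y / hsI σ τ (-(1/2)) y) ^ 2)

/-- The law of `Y` with independent coordinates `Y_i ~ N(θ i, σ²)`. -/
noncomputable def gaussPi (σ : ℝ) {n : ℕ} (θ : Fin n → ℝ) : Measure (Fin n → ℝ) :=
  Measure.pi fun i => gaussianReal (θ i) (Real.toNNReal (σ ^ 2))

/-- `θ` is nearly black: at most `p` nonzero coordinates. -/
def nearlyBlack {n : ℕ} (θ : Fin n → ℝ) (p : ℕ) : Prop :=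
  {i | θ i ≠ 0}.ncard ≤ p

/-- The horseshoe prior density on ℝ. -/
noncomputable def hsPriorDensity (σ τ t : ℝ) : ℝ :=
  ∫ l in Set.Ioi (0:ℝ),
    (2 / (π * (1 + l ^ 2))) * (σ * τ * l * Real.sqrt (2 * π))⁻¹ *
      Real.exp (-(t ^ 2) / (2 * σ ^ 2 * τ ^ 2 * l ^ 2))

/-- The horseshoe posterior mass of a set `A` given data `y`. -/
noncomputable def hsPost (σ τ : ℝ) {n : ℕ} (y : Fin n → ℝ) (A : Set (Fin n → ℝ)) : ℝ :=
  (∫ θ in A, (∏ i, hsPriorDensity σ τ (θ i)) *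
      Real.exp (-(∑ i, (y i - θ i) ^ 2) / (2 * σ ^ 2))) /
  ∫ θ : Fin n → ℝ, (∏ i, hsPriorDensity σ τ (θ i)) *
      Real.exp (-(∑ i, (y i - θ i) ^ 2) / (2 * σ ^ 2))

private lemma hs_one_sub_sq {τ : ℝ} (hτ0 : 0 ≤ τ) (hτ1 : τ ≤ 1) : 0 ≤ 1 - τ^2 := by nlinarith

private lemma hs_denom_pos {τ z : ℝ} (hτ0 : 0 < τ) (hτ1 : τ ≤ 1) (hz : 0 ≤ z) :
    0 < τ^2 + (1-τ^2)*z := by nlinarith [mul_nonneg (hs_one_sub_sq hτ0.le hτ1) hz]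

private lemma hs_denom_le_one {τ z : ℝ} (hτ0 : 0 ≤ τ) (hτ1 : τ ≤ 1) (hz : 0 ≤ z) (hz1 : z ≤ 1) :
    τ^2 + (1-τ^2)*z ≤ 1 := by nlinarith [mul_nonneg (hs_one_sub_sq hτ0 hτ1) (sub_nonneg.mpr hz1)]

private lemma hs_nonneg {τ a k z : ℝ} (hτ0 : 0 ≤ τ) (hτ1 : τ ≤ 1) (hz : 0 ≤ z) :
    0 ≤ z ^ k * ((τ^2+(1-τ^2)*z)⁻¹ * Real.exp (a*z)) := by
  have h1 : (0:ℝ) ≤ τ^2 + (1-τ^2)*z := by nlinarith [mul_nonneg (hs_one_sub_sq hτ0 hτ1) hz]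
  have := Real.rpow_nonneg hz k
  positivity

private lemma hs_contOn {τ a k : ℝ} (hτ0 : 0 < τ) (hτ1 : τ ≤ 1) :
    ContinuousOn (fun z : ℝ => z ^ k * ((τ^2+(1-τ^2)*z)⁻¹ * Real.exp (a*z))) (Ioc 0 1) := by
  apply ContinuousOn.mul
  · exact continuousOn_id.rpow_const fun z hz => Or.inl (ne_of_gt hz.1)
  · apply ContinuousOn.mul
    · exact ((continuous_const.add (continuous_const.mul continuous_id)).continuousOn).inv₀
        fun z hz => (hs_denom_pos hτ0 hτ1 hz.1.le).ne'
    · exact (Real.continuous_exp.comp (continuous_const.mul continuous_id)).continuousOn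

private lemma hs_int_neg {τ a : ℝ} (hτ0 : 0 < τ) (hτ1 : τ ≤ 1) (ha : 0 ≤ a) :
    IntervalIntegrable (fun z : ℝ => z ^ (-(1/2):ℝ) * ((τ^2+(1-τ^2)*z)⁻¹ * Real.exp (a*z)))
      MeasureTheory.volume 0 1 := by
  have hB : IntervalIntegrable (fun z : ℝ => ((τ^2)⁻¹ * Real.exp a) * z ^ (-(1/2):ℝ))
      MeasureTheory.volume 0 1 :=
    (intervalIntegral.intervalIntegrable_rpow' (by norm_num)).const_mul _
  refine hB.mono_fun ?_ ?_
  · have h1 : Set.uIoc (0:ℝ) 1 = Ioc 0 1 := Set.uIoc_of_le zero_le_one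
    rw [h1]
    exact (hs_contOn hτ0 hτ1).aestronglyMeasurable measurableSet_Ioc
  · filter_upwards [MeasureTheory.ae_restrict_mem measurableSet_uIoc] with z hz
    rw [Set.uIoc_of_le zero_le_one] at hz
    have hz0 : 0 < z := hz.1
    have hz1 : z ≤ 1 := hz.2
    have hnn := hs_nonneg (τ := τ) (a := a) (k := (-(1/2):ℝ)) hτ0.le hτ1 hz0.le
    have hr : (0:ℝ) ≤ z ^ (-(1/2):ℝ) := Real.rpow_nonneg hz0.le _
    rw [Real.norm_eq_abs, Real.norm_eq_abs, abs_of_nonneg hnn, abs_of_nonneg (by positivity)]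
    have h2 : (τ^2+(1-τ^2)*z)⁻¹ ≤ (τ^2)⁻¹ := by
      apply inv_anti₀ (by positivity)
      nlinarith [mul_nonneg (hs_one_sub_sq hτ0.le hτ1) hz0.le]
    have h3 : Real.exp (a*z) ≤ Real.exp a := by
      apply Real.exp_le_exp.mpr; nlinarith [mul_nonneg ha (sub_nonneg.mpr hz1)]
    calc z ^ (-(1/2):ℝ) * ((τ^2+(1-τ^2)*z)⁻¹ * Real.exp (a*z))
        ≤ z ^ (-(1/2):ℝ) * ((τ^2)⁻¹ * Real.exp a) := by
          apply mul_le_mul_of_nonneg_left _ hr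
          exact mul_le_mul h2 h3 (Real.exp_pos _).le (by positivity)
      _ = (τ^2)⁻¹ * Real.exp a * z ^ (-(1/2):ℝ) := by ring

private lemma hs_int_half {τ a : ℝ} (hτ0 : 0 < τ) (hτ1 : τ ≤ 1) :
    IntervalIntegrable (fun z : ℝ => z ^ ((1/2):ℝ) * ((τ^2+(1-τ^2)*z)⁻¹ * Real.exp (a*z)))
      MeasureTheory.volume 0 1 := by
  apply ContinuousOn.intervalIntegrable
  rw [Set.uIcc_of_le (zero_le_one)]
  apply ContinuousOn.mul
  · exact continuousOn_id.rpow_const fun z hz => Or.inr (by norm_num)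
  · apply ContinuousOn.mul
    · exact ((continuous_const.add (continuous_const.mul continuous_id)).continuousOn).inv₀
        fun z hz => (hs_denom_pos hτ0 hτ1 hz.1).ne'
    · exact (Real.continuous_exp.comp (continuous_const.mul continuous_id)).continuousOn

private lemma hs_sq_rpow_half {τ : ℝ} (h : 0 ≤ τ) : ((τ^2) : ℝ) ^ ((1/2):ℝ) = τ := by
  rw [← Real.rpow_natCast τ 2, ← Real.rpow_mul h]; norm_num

private lemma hs_sq_rpow_neg_half {τ : ℝ} (h : 0 < τ) : ((τ^2) : ℝ) ^ (-(1/2):ℝ) = τ⁻¹ := by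
  rw [Real.rpow_neg (by positivity), hs_sq_rpow_half h.le]

private lemma hs_I_lower {τ a : ℝ} (hτ0 : 0 < τ) (hτ1 : τ ≤ 1) (ha : 2 ≤ a) :
    Real.exp (a-1) / a
      ≤ ∫ z in (0:ℝ)..1, z ^ (-(1/2):ℝ) * ((τ^2+(1-τ^2)*z)⁻¹ * Real.exp (a*z)) := by
  have ha0 : (0:ℝ) < a := by linarith
  set s : ℝ := 1 - 1/a with hs
  have hinva : 1/a ≤ 1/2 := by rw [div_le_div_iff₀ ha0 (by norm_num)]; linarith
  have hinva0 : 0 < 1/a := by positivity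
  have hs0 : 0 < s := by rw [hs]; linarith
  have hs1 : s ≤ 1 := by rw [hs]; linarith
  have hint := hs_int_neg hτ0 hτ1 (by linarith : (0:ℝ) ≤ a)
  have hsub1 : Set.uIcc (0:ℝ) s ⊆ Set.uIcc (0:ℝ) 1 := by
    rw [Set.uIcc_of_le hs0.le, Set.uIcc_of_le zero_le_one]
    exact Set.Icc_subset_Icc le_rfl hs1
  have hsub2 : Set.uIcc s (1:ℝ) ⊆ Set.uIcc (0:ℝ) 1 := by
    rw [Set.uIcc_of_le hs1, Set.uIcc_of_le zero_le_one]
    exact Set.Icc_subset_Icc hs0.le le_rfl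
  have h0s := hint.mono_set hsub1
  have hs1i := hint.mono_set hsub2
  rw [← intervalIntegral.integral_add_adjacent_intervals h0s hs1i]
  have hfirst : (0:ℝ) ≤ ∫ z in (0:ℝ)..s,
      z ^ (-(1/2):ℝ) * ((τ^2+(1-τ^2)*z)⁻¹ * Real.exp (a*z)) := by
    apply intervalIntegral.integral_nonneg hs0.le
    intro z hz
    exact hs_nonneg hτ0.le hτ1 hz.1
  have hsecond : Real.exp (a-1) / a ≤ ∫ z in s..(1:ℝ),
      z ^ (-(1/2):ℝ) * ((τ^2+(1-τ^2)*z)⁻¹ * Real.exp (a*z)) := by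
    have hconst : ∫ z in s..(1:ℝ), Real.exp (a-1) = Real.exp (a-1) / a := by
      rw [intervalIntegral.integral_const, smul_eq_mul]
      have : (1:ℝ) - s = 1/a := by rw [hs]; ring
      rw [this]; ring
    rw [← hconst]
    apply intervalIntegral.integral_mono_on hs1 (intervalIntegrable_const) hs1i
    intro z hz
    have hz0 : 0 < z := lt_of_lt_of_le hs0 hz.1
    have h1 : 1 ≤ z ^ (-(1/2):ℝ) :=
      Real.one_le_rpow_of_pos_of_le_one_of_nonpos hz0 hz.2 (by norm_num)
    have h2 : 1 ≤ (τ^2+(1-τ^2)*z)⁻¹ := by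
      have hle := hs_denom_le_one hτ0.le hτ1 hz0.le hz.2
      have := inv_anti₀ (hs_denom_pos hτ0 hτ1 hz0.le) hle
      simpa using this
    have h3 : Real.exp (a-1) ≤ Real.exp (a*z) := by
      apply Real.exp_le_exp.mpr
      have : a * s ≤ a * z := mul_le_mul_of_nonneg_left hz.1 ha0.le
      have has : a * s = a - 1 := by rw [hs]; field_simp
      linarith
    calc Real.exp (a-1) ≤ Real.exp (a*z) := h3
      _ ≤ (τ^2+(1-τ^2)*z)⁻¹ * Real.exp (a*z) :=
          le_mul_of_one_le_left (Real.exp_pos _).le h2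
      _ ≤ z ^ (-(1/2):ℝ) * ((τ^2+(1-τ^2)*z)⁻¹ * Real.exp (a*z)) := by
          apply le_mul_of_one_le_left _ h1
          have h4 : (0:ℝ) < τ^2+(1-τ^2)*z := hs_denom_pos hτ0 hτ1 hz0.le
          positivity
  linarith

private lemma hs_diff_int {τ a u v : ℝ} (hτ0 : 0 < τ) (hτ1 : τ ≤ 1) (ha : 0 ≤ a)
    (hu : 0 ≤ u) (huv : u ≤ v) (hv : v ≤ 1) :
    IntervalIntegrable (fun z : ℝ => (z ^ (-(1/2):ℝ) - z ^ ((1/2):ℝ))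
      * ((τ^2+(1-τ^2)*z)⁻¹ * Real.exp (a*z))) MeasureTheory.volume u v := by
  have h1 := (hs_int_neg hτ0 hτ1 ha).sub (hs_int_half (a := a) hτ0 hτ1)
  have h2 : Set.uIcc u v ⊆ Set.uIcc (0:ℝ) 1 := by
    rw [Set.uIcc_of_le huv, Set.uIcc_of_le zero_le_one]
    exact Set.Icc_subset_Icc hu hv
  have := h1.mono_set h2
  apply this.congr
  intro z _
  ring

private lemma hs_part1 {τ a w : ℝ} (hτ0 : 0 < τ) (hτ1 : τ ≤ 1) (ha : 0 ≤ a)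
    (hw : τ^2 ≤ w) (hw1 : w ≤ 1) :
    ∫ z in (0:ℝ)..τ^2, (z ^ (-(1/2):ℝ) - z ^ ((1/2):ℝ)) * ((τ^2+(1-τ^2)*z)⁻¹ * Real.exp (a*z))
      ≤ 2 * Real.exp (a*w) / τ := by
  have hτsq1 : τ^2 ≤ 1 := le_trans hw hw1
  have hC : ∫ z in (0:ℝ)..τ^2, ((τ^2)⁻¹ * Real.exp (a*w)) * z ^ (-(1/2):ℝ)
      = 2 * Real.exp (a*w) / τ := by
    rw [intervalIntegral.integral_const_mul,
      integral_rpow (Or.inl (by norm_num : (-1:ℝ) < -(1/2)))]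
    have h0 : ((0:ℝ)) ^ ((-(1/2):ℝ)+1) = 0 := by
      rw [Real.zero_rpow (by norm_num)]
    rw [h0]
    have h1 : ((τ^2:ℝ)) ^ ((-(1/2):ℝ)+1) = τ := by
      rw [show ((-(1/2):ℝ)+1) = (1/2:ℝ) by norm_num, hs_sq_rpow_half hτ0.le]
    rw [h1]
    field_simp
    ring
  rw [← hC]
  apply intervalIntegral.integral_mono_on (by positivity)
    (hs_diff_int hτ0 hτ1 ha le_rfl (by positivity) hτsq1)
    ((intervalIntegral.intervalIntegrable_rpow' (by norm_num)).const_mul _)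
  intro z hz
  have hz0 : 0 ≤ z := hz.1
  have hg : (τ^2+(1-τ^2)*z)⁻¹ * Real.exp (a*z) ≤ (τ^2)⁻¹ * Real.exp (a*w) := by
    have h2 : (τ^2+(1-τ^2)*z)⁻¹ ≤ (τ^2)⁻¹ := by
      apply inv_anti₀ (by positivity)
      nlinarith [mul_nonneg (hs_one_sub_sq hτ0.le hτ1) hz0]
    have h3 : Real.exp (a*z) ≤ Real.exp (a*w) := by
      apply Real.exp_le_exp.mpr
      apply mul_le_mul_of_nonneg_left (le_trans hz.2 hw) ha
    exact mul_le_mul h2 h3 (Real.exp_pos _).le (by positivity)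
  have hgnn : 0 ≤ (τ^2+(1-τ^2)*z)⁻¹ * Real.exp (a*z) := by
    have := hs_denom_pos hτ0 hτ1 hz0
    positivity
  calc (z ^ (-(1/2):ℝ) - z ^ ((1/2):ℝ)) * ((τ^2+(1-τ^2)*z)⁻¹ * Real.exp (a*z))
      ≤ z ^ (-(1/2):ℝ) * ((τ^2+(1-τ^2)*z)⁻¹ * Real.exp (a*z)) := by
        apply mul_le_mul_of_nonneg_right _ hgnn
        have : (0:ℝ) ≤ z ^ ((1/2):ℝ) := Real.rpow_nonneg hz0 _
        linarith
    _ ≤ z ^ (-(1/2):ℝ) * ((τ^2)⁻¹ * Real.exp (a*w)) :=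
        mul_le_mul_of_nonneg_left hg (Real.rpow_nonneg hz0 _)
    _ = ((τ^2)⁻¹ * Real.exp (a*w)) * z ^ (-(1/2):ℝ) := by ring

private lemma hs_part2 {τ a w : ℝ} (hτ0 : 0 < τ) (hτ1 : τ ≤ 1/2) (ha : 0 ≤ a)
    (hw : τ^2 ≤ w) (hw1 : w ≤ 1) :
    ∫ z in (τ^2:ℝ)..w, (z ^ (-(1/2):ℝ) - z ^ ((1/2):ℝ)) * ((τ^2+(1-τ^2)*z)⁻¹ * Real.exp (a*z))
      ≤ 4 * Real.exp (a*w) / τ := by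
  have hτ1' : τ ≤ 1 := by linarith
  have hτsq0 : (0:ℝ) < τ^2 := by positivity
  have hBi : IntervalIntegrable (fun z : ℝ => (2 * Real.exp (a*w)) * z ^ (-(3/2):ℝ))
      MeasureTheory.volume (τ^2) w := by
    apply ContinuousOn.intervalIntegrable
    refine continuousOn_const.mul (continuousOn_id.rpow_const ?_)
    intro z hz
    rw [Set.uIcc_of_le hw] at hz
    exact Or.inl (ne_of_gt (lt_of_lt_of_le hτsq0 hz.1))
  have hval : ∫ z in (τ^2:ℝ)..w, (2 * Real.exp (a*w)) * z ^ (-(3/2):ℝ)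
      ≤ 4 * Real.exp (a*w) / τ := by
    rw [intervalIntegral.integral_const_mul,
      integral_rpow (Or.inr ⟨by norm_num, by
        rw [Set.uIcc_of_le hw]
        intro h0
        exact absurd h0.1 (not_le.mpr hτsq0)⟩)]
    have h1 : ((τ^2:ℝ)) ^ ((-(3/2):ℝ)+1) = τ⁻¹ := by
      rw [show ((-(3/2):ℝ)+1) = (-(1/2):ℝ) by norm_num, hs_sq_rpow_neg_half hτ0]
    rw [h1]
    have h2 : (0:ℝ) ≤ w ^ ((-(3/2):ℝ)+1) := Real.rpow_nonneg (le_trans hτsq0.le hw) _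
    have h3 : (0:ℝ) < Real.exp (a*w) := Real.exp_pos _
    rw [show ((-(3/2):ℝ)+1) = (-(1/2):ℝ) by norm_num] at h2 ⊢
    have h4 : (w ^ (-(1/2):ℝ) - τ⁻¹) / (-(1/2):ℝ) = 2 * (τ⁻¹ - w ^ (-(1/2):ℝ)) := by
      ring
    rw [h4]
    have h5 : 2 * (τ⁻¹ - w ^ (-(1/2):ℝ)) ≤ 2 * τ⁻¹ := by linarith
    calc 2 * Real.exp (a*w) * (2 * (τ⁻¹ - w ^ (-(1/2):ℝ)))
        ≤ 2 * Real.exp (a*w) * (2 * τ⁻¹) := by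
          apply mul_le_mul_of_nonneg_left h5 (by positivity)
      _ = 4 * Real.exp (a*w) / τ := by field_simp; ring
  refine le_trans ?_ hval
  apply intervalIntegral.integral_mono_on hw
    (hs_diff_int hτ0 hτ1' ha (by positivity) hw hw1) hBi
  intro z hz
  have hz0 : 0 < z := lt_of_lt_of_le hτsq0 hz.1
  have hg : (τ^2+(1-τ^2)*z)⁻¹ * Real.exp (a*z) ≤ (2 * z⁻¹) * Real.exp (a*w) := by
    have hd : z/2 ≤ τ^2+(1-τ^2)*z := by
      nlinarith [mul_nonneg (by nlinarith : (0:ℝ) ≤ 1/2 - τ^2) hz0.le]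
    have h2 : (τ^2+(1-τ^2)*z)⁻¹ ≤ (z/2)⁻¹ := inv_anti₀ (by positivity) hd
    have h3 : Real.exp (a*z) ≤ Real.exp (a*w) :=
      Real.exp_le_exp.mpr (mul_le_mul_of_nonneg_left hz.2 ha)
    calc (τ^2+(1-τ^2)*z)⁻¹ * Real.exp (a*z) ≤ (z/2)⁻¹ * Real.exp (a*w) :=
          mul_le_mul h2 h3 (Real.exp_pos _).le (by positivity)
      _ = (2 * z⁻¹) * Real.exp (a*w) := by rw [inv_div, div_eq_mul_inv]
  have hgnn : 0 ≤ (τ^2+(1-τ^2)*z)⁻¹ * Real.exp (a*z) := by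
    have := hs_denom_pos hτ0 hτ1' hz0.le
    positivity
  calc (z ^ (-(1/2):ℝ) - z ^ ((1/2):ℝ)) * ((τ^2+(1-τ^2)*z)⁻¹ * Real.exp (a*z))
      ≤ z ^ (-(1/2):ℝ) * ((τ^2+(1-τ^2)*z)⁻¹ * Real.exp (a*z)) := by
        apply mul_le_mul_of_nonneg_right _ hgnn
        have : (0:ℝ) ≤ z ^ ((1/2):ℝ) := Real.rpow_nonneg hz0.le _
        linarith
    _ ≤ z ^ (-(1/2):ℝ) * ((2 * z⁻¹) * Real.exp (a*w)) :=
        mul_le_mul_of_nonneg_left hg (Real.rpow_nonneg hz0.le _)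
    _ = (2 * Real.exp (a*w)) * (z ^ (-(1/2):ℝ) * z⁻¹) := by ring
    _ = (2 * Real.exp (a*w)) * z ^ (-(3/2):ℝ) := by
        rw [← Real.rpow_neg_one z, ← Real.rpow_add hz0]
        norm_num

private lemma hs_ftc {a w : ℝ} (ha : 0 < a) (hw1 : w ≤ 1) :
    ∫ z in w..(1:ℝ), (1-z)*Real.exp (a*z) ≤ Real.exp a / a^2 := by
  have hderiv : ∀ z ∈ Set.uIcc w (1:ℝ),
      HasDerivAt (fun z : ℝ => Real.exp (a*z) * (1/a^2 + (1-z)/a)) ((1-z)*Real.exp (a*z)) z := by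
    intro z _
    have h1 : HasDerivAt (fun z : ℝ => a*z) a z := by
      simpa using (hasDerivAt_id z).const_mul a
    have h2 := h1.exp
    have h3 : HasDerivAt (fun z : ℝ => 1/a^2 + (1-z)/a) (-(1/a)) z := by
      have := ((hasDerivAt_const z (1:ℝ)).sub (hasDerivAt_id z)).div_const a
      have h4 := (hasDerivAt_const z (1/a^2:ℝ)).add this
      refine h4.congr_deriv ?_
      ring
    have h5 := h2.mul h3
    refine h5.congr_deriv ?_
    field_simp
    ring
  have hint : IntervalIntegrable (fun z : ℝ => (1-z)*Real.exp (a*z)) MeasureTheory.volume w 1 :=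
    ((continuous_const.sub continuous_id).mul
      (Real.continuous_exp.comp (continuous_const.mul continuous_id))).intervalIntegrable _ _
  rw [intervalIntegral.integral_eq_sub_of_hasDerivAt hderiv hint]
  have h6 : (0:ℝ) ≤ Real.exp (a*w) * (1/a^2 + (1-w)/a) := by
    have : (0:ℝ) ≤ 1 - w := by linarith
    positivity
  have h7 : Real.exp (a*1) * (1/a^2 + (1-1)/a) = Real.exp a / a^2 := by
    rw [mul_one]
    field_simp
    ring
  rw [h7]
  linarith

private lemma hs_part3 {τ a w : ℝ} (hτ0 : 0 < τ) (hτ1 : τ ≤ 1/2) (ha : 0 < a)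
    (hw0 : 0 < w) (hw1 : w ≤ 1) :
    ∫ z in w..(1:ℝ), (z ^ (-(1/2):ℝ) - z ^ ((1/2):ℝ)) * ((τ^2+(1-τ^2)*z)⁻¹ * Real.exp (a*z))
      ≤ (w ^ (-(1/2):ℝ) * (2/w)) * (Real.exp a / a^2) := by
  have hτ1' : τ ≤ 1 := by linarith
  set Cw : ℝ := w ^ (-(1/2):ℝ) * (2/w) with hCw
  have hCw0 : 0 < Cw := by
    have := Real.rpow_pos_of_pos hw0 (-(1/2):ℝ)
    positivity
  have hBi : IntervalIntegrable (fun z : ℝ => Cw * ((1-z)*Real.exp (a*z)))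
      MeasureTheory.volume w 1 :=
    (continuous_const.mul ((continuous_const.sub continuous_id).mul
      (Real.continuous_exp.comp (continuous_const.mul continuous_id)))).intervalIntegrable _ _
  have hmono : ∫ z in w..(1:ℝ), (z ^ (-(1/2):ℝ) - z ^ ((1/2):ℝ)) * ((τ^2+(1-τ^2)*z)⁻¹ * Real.exp (a*z))
      ≤ ∫ z in w..(1:ℝ), Cw * ((1-z)*Real.exp (a*z)) := by
    apply intervalIntegral.integral_mono_on hw1
      (hs_diff_int hτ0 hτ1' ha.le hw0.le hw1 le_rfl) hBi
    intro z hz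
    have hz0 : 0 < z := lt_of_lt_of_le hw0 hz.1
    have hz1 : z ≤ 1 := hz.2
    have hfac : z ^ (-(1/2):ℝ) - z ^ ((1/2):ℝ) = z ^ (-(1/2):ℝ) * (1-z) := by
      have : z ^ ((1/2):ℝ) = z ^ (-(1/2):ℝ) * z := by
        have he : z ^ ((1/2):ℝ) = z ^ ((-(1/2):ℝ) + 1) := by norm_num
        rw [he, Real.rpow_add hz0, Real.rpow_one]
      rw [this]; ring
    have h1 : z ^ (-(1/2):ℝ) ≤ w ^ (-(1/2):ℝ) :=
      Real.rpow_le_rpow_of_nonpos hw0 hz.1 (by norm_num)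
    have h2 : (τ^2+(1-τ^2)*z)⁻¹ ≤ 2/w := by
      have hd : w/2 ≤ τ^2+(1-τ^2)*z := by
        nlinarith [mul_nonneg (by nlinarith : (0:ℝ) ≤ 1/2 - τ^2) hz0.le,
          mul_le_mul_of_nonneg_left hz.1 (by nlinarith : (0:ℝ) ≤ 1/2 - τ^2)]
      have := inv_anti₀ (by positivity) hd
      calc (τ^2+(1-τ^2)*z)⁻¹ ≤ (w/2)⁻¹ := this
        _ = 2/w := by rw [inv_div]
    have h1z : (0:ℝ) ≤ 1 - z := by linarith
    rw [hfac]
    calc z ^ (-(1/2):ℝ) * (1-z) * ((τ^2+(1-τ^2)*z)⁻¹ * Real.exp (a*z))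
        ≤ w ^ (-(1/2):ℝ) * (1-z) * ((2/w) * Real.exp (a*z)) := by
          apply mul_le_mul
          · exact mul_le_mul_of_nonneg_right h1 h1z
          · exact mul_le_mul_of_nonneg_right h2 (Real.exp_pos _).le
          · have := hs_denom_pos hτ0 hτ1' hz0.le
            positivity
          · have := Real.rpow_nonneg hw0.le (-(1/2):ℝ)
            positivity
      _ = Cw * ((1-z)*Real.exp (a*z)) := by rw [hCw]; ring
  calc _ ≤ ∫ z in w..(1:ℝ), Cw * ((1-z)*Real.exp (a*z)) := hmono
    _ = Cw * ∫ z in w..(1:ℝ), (1-z)*Real.exp (a*z) := intervalIntegral.integral_const_mul _ _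
    _ ≤ Cw * (Real.exp a / a^2) := mul_le_mul_of_nonneg_left (hs_ftc ha hw1) hCw0.le

private lemma hs_D_bound {τ a w : ℝ} (hτ0 : 0 < τ) (hτ1 : τ ≤ 1/2) (ha : 0 < a)
    (hw : τ^2 ≤ w) (hw1 : w ≤ 1) :
    (∫ z in (0:ℝ)..1, z ^ (-(1/2):ℝ) * ((τ^2+(1-τ^2)*z)⁻¹ * Real.exp (a*z)))
      - (∫ z in (0:ℝ)..1, z ^ ((1/2):ℝ) * ((τ^2+(1-τ^2)*z)⁻¹ * Real.exp (a*z)))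
      ≤ 6 * Real.exp (a*w) / τ + (w ^ (-(1/2):ℝ) * (2/w)) * (Real.exp a / a^2) := by
  have hτ1' : τ ≤ 1 := by linarith
  have hw0 : 0 < w := lt_of_lt_of_le (by positivity) hw
  rw [← intervalIntegral.integral_sub (hs_int_neg hτ0 hτ1' ha.le)
    (hs_int_half (a := a) hτ0 hτ1')]
  have hcongr : (∫ z in (0:ℝ)..1, (z ^ (-(1/2):ℝ) * ((τ^2+(1-τ^2)*z)⁻¹ * Real.exp (a*z))
        - z ^ ((1/2):ℝ) * ((τ^2+(1-τ^2)*z)⁻¹ * Real.exp (a*z))))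
      = ∫ z in (0:ℝ)..1, (z ^ (-(1/2):ℝ) - z ^ ((1/2):ℝ))
          * ((τ^2+(1-τ^2)*z)⁻¹ * Real.exp (a*z)) :=
    intervalIntegral.integral_congr (fun z _ => by ring)
  rw [hcongr]
  have hτsq0 : (0:ℝ) ≤ τ^2 := by positivity
  have h12 := intervalIntegral.integral_add_adjacent_intervals
    (hs_diff_int hτ0 hτ1' ha.le le_rfl hτsq0 (le_trans hw hw1))
    (hs_diff_int hτ0 hτ1' ha.le hτsq0 hw hw1)
  have h123 := intervalIntegral.integral_add_adjacent_intervals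
    (hs_diff_int hτ0 hτ1' ha.le le_rfl (le_trans hτsq0 hw) hw1)
    (hs_diff_int hτ0 hτ1' ha.le hw0.le hw1 le_rfl)
  rw [← h123, ← h12]
  have b1 := hs_part1 hτ0 hτ1' ha.le hw hw1
  have b2 := hs_part2 hτ0 hτ1 ha.le hw hw1
  have b3 := hs_part3 hτ0 hτ1 ha hw0 hw1
  have hsum : 2 * Real.exp (a*w) / τ + 4 * Real.exp (a*w) / τ = 6 * Real.exp (a*w) / τ := by
    ring
  linarith

private lemma hs_abs_identity {I1 I2 y : ℝ} (h2 : I2 ≠ 0) :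
    y * I1 / I2 - y = -(y*(I2 - I1))/I2 := by field_simp; ring

private lemma hs_I_mono {τ a : ℝ} (hτ0 : 0 < τ) (hτ1 : τ ≤ 1) (ha : 0 ≤ a) :
    (∫ z in (0:ℝ)..1, z ^ ((1/2):ℝ) * ((τ^2+(1-τ^2)*z)⁻¹ * Real.exp (a*z)))
      ≤ ∫ z in (0:ℝ)..1, z ^ (-(1/2):ℝ) * ((τ^2+(1-τ^2)*z)⁻¹ * Real.exp (a*z)) := by
  apply intervalIntegral.integral_mono_on zero_le_one (hs_int_half hτ0 hτ1)
    (hs_int_neg hτ0 hτ1 ha)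
  intro z hz
  have hg : 0 ≤ (τ^2+(1-τ^2)*z)⁻¹ * Real.exp (a*z) := by
    have := hs_denom_pos hτ0 hτ1 hz.1
    positivity
  apply mul_le_mul_of_nonneg_right _ hg
  rcases eq_or_lt_of_le hz.1 with h0 | h0
  · rw [← h0, Real.zero_rpow (by norm_num), Real.zero_rpow (by norm_num)]
  · exact Real.rpow_le_rpow_of_exponent_ge h0 hz.2 (by norm_num)

set_option maxHeartbeats 1600000 in
/-- Lemma A.3: `sup_{|y| ≥ √(cσ² log(1/τ))} |T_τ(y) − y| → 0` as `τ ↓ 0`, for any `c > 2`. -/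
theorem hsT_shrinkage_vanishes (σ c : ℝ) (hσ : 0 < σ) (hc : 2 < c) :
    ∀ ε : ℝ, 0 < ε → ∃ τ₀ : ℝ, τ₀ ∈ Set.Ioo (0:ℝ) 1 ∧
      ∀ τ : ℝ, τ ∈ Set.Ioo (0:ℝ) τ₀ →
      ∀ y : ℝ, Real.sqrt (c * σ ^ 2 * Real.log (1 / τ)) ≤ |y| →
        |hsT σ τ y - y| ≤ ε := by
  intro ε hε
  have hc0 : (0:ℝ) < c := by linarith
  obtain ⟨w, hw_def⟩ : ∃ w : ℝ, w = (c-2)/(2*c) := ⟨_, rfl⟩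
  obtain ⟨δ₁, hδ₁_def⟩ : ∃ x : ℝ, x = (c-2)/(4*c) := ⟨_, rfl⟩
  obtain ⟨δ₂, hδ₂_def⟩ : ∃ x : ℝ, x = (c+6)/(4*c) := ⟨_, rfl⟩
  obtain ⟨β, hβ_def⟩ : ∃ x : ℝ, x = (c-2)/8 := ⟨_, rfl⟩
  have hw0 : 0 < w := hw_def ▸ div_pos (by linarith) (by linarith)
  have hw1 : w ≤ 1 := by
    rw [hw_def, div_le_one (by linarith)]; linarith
  have hδ₁0 : 0 < δ₁ := hδ₁_def ▸ div_pos (by linarith) (by linarith)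
  have hδ₂0 : 0 < δ₂ := hδ₂_def ▸ div_pos (by linarith) (by linarith)
  have hβ0 : 0 < β := hβ_def ▸ div_pos (by linarith) (by norm_num)
  have hwsum : w = 1 - δ₁ - δ₂ := by
    rw [hw_def, hδ₁_def, hδ₂_def]; field_simp; ring
  have hδ₂c : c*δ₂/2 = 1 + β := by
    rw [hδ₂_def, hβ_def]; field_simp; ring
  obtain ⟨M, hM_def⟩ : ∃ x : ℝ, x = 27/δ₁^3 := ⟨_, rfl⟩
  have hM0 : 0 < M := by rw [hM_def]; exact div_pos (by norm_num) (pow_pos hδ₁0 3)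
  obtain ⟨Cw, hCw_def⟩ : ∃ x : ℝ, x = w ^ (-(1/2):ℝ) * (2/w) := ⟨_, rfl⟩
  have hCw0 : 0 < Cw := by
    rw [hCw_def]
    exact mul_pos (Real.rpow_pos_of_pos hw0 _) (div_pos (by norm_num) hw0)
  have hsqrt2 : (0:ℝ) < Real.sqrt 2 := Real.sqrt_pos.mpr (by norm_num)
  obtain ⟨K₁, hK₁_def⟩ : ∃ x : ℝ, x = 6*Real.sqrt 2*σ*Real.exp 1*M := ⟨_, rfl⟩
  have hK₁0 : 0 < K₁ := by
    rw [hK₁_def]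
    have h6 : (0:ℝ) < 6*Real.sqrt 2*σ*Real.exp 1 := by positivity
    exact mul_pos h6 hM0
  obtain ⟨K₂, hK₂_def⟩ : ∃ x : ℝ, x = Real.sqrt 2*σ*Cw*Real.exp 1 := ⟨_, rfl⟩
  have hK₂0 : 0 < K₂ := by
    rw [hK₂_def]
    exact mul_pos (mul_pos (mul_pos hsqrt2 hσ) hCw0) (Real.exp_pos 1)
  obtain ⟨A, hA_def⟩ : ∃ x : ℝ, x = max 2 ((2*K₂/ε)^2) := ⟨_, rfl⟩
  have hA2 : (2:ℝ) ≤ A := hA_def ▸ le_max_left _ _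
  obtain ⟨b, hb_def⟩ : ∃ x : ℝ, x = min (1/2) (ε/(2*K₁)) := ⟨_, rfl⟩
  have hb0 : 0 < b := by
    rw [hb_def]
    exact lt_min (by norm_num) (div_pos hε (by linarith))
  refine ⟨min (min (1/2) (Real.sqrt (w/2))) (min (Real.exp (-(2*A/c))) (b ^ (1/β : ℝ))),
    ⟨?_, ?_⟩, ?_⟩
  · have h1 : (0:ℝ) < Real.sqrt (w/2) := Real.sqrt_pos.mpr (by linarith)
    have h2 : (0:ℝ) < b ^ (1/β : ℝ) := Real.rpow_pos_of_pos hb0 _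
    have h3 := Real.exp_pos (-(2*A/c))
    exact lt_min (lt_min (by norm_num) h1) (lt_min h3 h2)
  · calc min (min (1/2) (Real.sqrt (w/2))) (min (Real.exp (-(2*A/c))) (b ^ (1/β : ℝ)))
        ≤ 1/2 := le_trans (min_le_left _ _) (min_le_left _ _)
      _ < 1 := by norm_num
  intro τ hτ y hy
  obtain ⟨hτ0, hτlt⟩ := hτ
  have hτhalf : τ ≤ 1/2 :=
    le_of_lt (lt_of_lt_of_le hτlt (le_trans (min_le_left _ _) (min_le_left _ _)))
  have hτone : τ ≤ 1 := by linarith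
  have hτ1 : τ < 1 := by linarith
  have hτsqrtw : τ < Real.sqrt (w/2) :=
    lt_of_lt_of_le hτlt (le_trans (min_le_left _ _) (min_le_right _ _))
  have hτexpA : τ < Real.exp (-(2*A/c)) :=
    lt_of_lt_of_le hτlt (le_trans (min_le_right _ _) (min_le_left _ _))
  have hτb : τ < b ^ (1/β : ℝ) :=
    lt_of_lt_of_le hτlt (le_trans (min_le_right _ _) (min_le_right _ _))
  have hτw : τ^2 ≤ w := by
    have h1 : τ^2 < (Real.sqrt (w/2))^2 :=
      pow_lt_pow_left₀ hτsqrtw hτ0.le (by norm_num)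
    rw [Real.sq_sqrt (by linarith : (0:ℝ) ≤ w/2)] at h1
    linarith
  obtain ⟨L, hL_def⟩ : ∃ x : ℝ, x = Real.log (1/τ) := ⟨_, rfl⟩
  rw [← hL_def] at hy
  have hLlog : L = - Real.log τ := by rw [hL_def, one_div, Real.log_inv]
  have hL0 : 0 < L := hL_def ▸ Real.log_pos (by rw [lt_div_iff₀ hτ0]; linarith)
  have hLA : 2*A/c < L := by
    have h1 := Real.log_lt_log hτ0 hτexpA
    rw [Real.log_exp] at h1
    rw [hLlog]
    linarith
  obtain ⟨a, ha_def⟩ : ∃ x : ℝ, x = y^2/(2*σ^2) := ⟨_, rfl⟩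
  have hcσL : c*σ^2*L ≤ y^2 := by
    have h1 := Real.sq_sqrt (show (0:ℝ) ≤ c*σ^2*L from mul_nonneg (by positivity) hL0.le)
    calc c*σ^2*L = (Real.sqrt (c*σ^2*L))^2 := h1.symm
      _ ≤ |y|^2 := pow_le_pow_left₀ (Real.sqrt_nonneg _) hy 2
      _ = y^2 := sq_abs y
  have hacL : c*L/2 ≤ a := by
    rw [ha_def, le_div_iff₀ (by positivity)]
    calc c*L/2*(2*σ^2) = c*σ^2*L := by ring
      _ ≤ y^2 := hcσL
  have haA : A < a := by
    have h1 : c*(2*A/c) < c*L := (mul_lt_mul_iff_right₀ hc0).mpr hLA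
    have h2 : c*(2*A/c) = 2*A := by field_simp
    linarith
  have ha2 : 2 ≤ a := le_trans hA2 haA.le
  have ha1 : 1 ≤ a := by linarith
  have ha0 : 0 < a := by linarith
  have hIeq : ∀ k : ℝ, hsI σ τ k y
      = ∫ z in (0:ℝ)..1, z ^ k * ((τ^2+(1-τ^2)*z)⁻¹ * Real.exp (a*z)) := by
    intro k
    unfold hsI
    apply intervalIntegral.integral_congr
    intro z _
    have hexp : y^2*z/(2*σ^2) = a*z := by rw [ha_def]; ring
    simp only [hexp]
    ring
  have hIlow : Real.exp (a-1)/a ≤ hsI σ τ (-(1/2)) y := by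
    rw [hIeq]; exact hs_I_lower hτ0 hτone ha2
  have hIpos : 0 < hsI σ τ (-(1/2)) y :=
    lt_of_lt_of_le (div_pos (Real.exp_pos _) ha0) hIlow
  have hmono : hsI σ τ (1/2) y ≤ hsI σ τ (-(1/2)) y := by
    rw [hIeq, hIeq]; exact hs_I_mono hτ0 hτone ha0.le
  have hD : hsI σ τ (-(1/2)) y - hsI σ τ (1/2) y
      ≤ 6 * Real.exp (a*w) / τ + Cw * (Real.exp a / a^2) := by
    rw [hIeq, hIeq, hCw_def]
    exact hs_D_bound hτ0 hτhalf ha0 hτw hw1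
  have hB0 : 0 < 6 * Real.exp (a*w) / τ + Cw * (Real.exp a / a^2) := by
    have h1 : 0 < 6 * Real.exp (a*w) / τ := div_pos (by positivity) hτ0
    have h2 : 0 ≤ Cw * (Real.exp a / a^2) :=
      mul_nonneg hCw0.le (div_nonneg (Real.exp_pos _).le (by positivity))
    linarith
  have hTeq : hsT σ τ y - y
      = -(y*(hsI σ τ (-(1/2)) y - hsI σ τ (1/2) y))/ hsI σ τ (-(1/2)) y := by
    unfold hsT
    exact hs_abs_identity hIpos.ne'
  have hTabs : |hsT σ τ y - y|
      = |y| * (hsI σ τ (-(1/2)) y - hsI σ τ (1/2) y) / hsI σ τ (-(1/2)) y := by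
    rw [hTeq, abs_div, abs_neg, abs_mul, abs_of_pos hIpos,
      abs_of_nonneg (sub_nonneg.mpr hmono)]
  have hstep : |hsT σ τ y - y|
      ≤ |y| * (6 * Real.exp (a*w) / τ + Cw * (Real.exp a / a^2)) / (Real.exp (a-1)/a) := by
    rw [hTabs]
    exact div_le_div₀ (mul_nonneg (abs_nonneg y) hB0.le)
      (mul_le_mul_of_nonneg_left hD (abs_nonneg y)) (div_pos (Real.exp_pos _) ha0) hIlow
  obtain ⟨sa, hsa_def⟩ : ∃ x : ℝ, x = Real.sqrt a := ⟨_, rfl⟩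
  have hsa0 : 0 < sa := hsa_def ▸ Real.sqrt_pos.mpr ha0
  have hsaa : sa^2 = a := hsa_def ▸ Real.sq_sqrt ha0.le
  have hyabs : |y| = Real.sqrt 2 * σ * sa := by
    have hsq : y^2 = (Real.sqrt 2 * σ * sa)^2 := by
      rw [mul_pow, mul_pow, Real.sq_sqrt (by norm_num : (0:ℝ) ≤ 2), hsaa, ha_def]
      field_simp
    calc |y| = Real.sqrt (y^2) := (Real.sqrt_sq_eq_abs y).symm
      _ = Real.sqrt ((Real.sqrt 2 * σ * sa)^2) := by rw [hsq]
      _ = Real.sqrt 2 * σ * sa :=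
          Real.sqrt_sq (mul_nonneg (mul_nonneg hsqrt2.le hσ.le) hsa0.le)
  have hsa1 : 1 ≤ sa := by
    rw [hsa_def, show (1:ℝ) = Real.sqrt 1 from Real.sqrt_one.symm]
    exact Real.sqrt_le_sqrt ha1
  have hsa_le_a : sa ≤ a := by
    calc sa = sa * 1 := (mul_one sa).symm
      _ ≤ sa * sa := mul_le_mul_of_nonneg_left hsa1 hsa0.le
      _ = a := by rw [← hsaa]; ring
  have hrw : |y| * (6 * Real.exp (a*w) / τ + Cw * (Real.exp a / a^2)) / (Real.exp (a-1)/a)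
      = |y| * (6*Real.exp (a*w)/τ)*a/Real.exp (a-1)
        + |y| * (Cw*(Real.exp a/a^2))*a/Real.exp (a-1) := by
    field_simp
  have hT1 : |y| * (6*Real.exp (a*w)/τ)*a/Real.exp (a-1) ≤ ε/2 := by
    have hEid : Real.exp (a*w)
        = Real.exp 1 * Real.exp (-(a*δ₁)) * Real.exp (-(a*δ₂)) * Real.exp (a-1) := by
      rw [← Real.exp_add, ← Real.exp_add, ← Real.exp_add]
      congr 1
      rw [hwsum]; ring
    have hfact : |y| * (6*Real.exp (a*w)/τ)*a/Real.exp (a-1)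
        = (6*Real.sqrt 2*σ*Real.exp 1)
            * ((sa*a*Real.exp (-(a*δ₁))) * (Real.exp (-(a*δ₂))/τ)) := by
      rw [hyabs, hEid]
      field_simp
    rw [hfact]
    have hb1 : sa*a*Real.exp (-(a*δ₁)) ≤ M := by
      have hcube : (a*δ₁)^3/27 ≤ Real.exp (a*δ₁) := by
        have h1 : a*δ₁/3 ≤ Real.exp (a*δ₁/3) := by
          linarith [Real.add_one_le_exp (a*δ₁/3)]
        have h2 : (a*δ₁/3)^3 ≤ (Real.exp (a*δ₁/3))^3 :=
          pow_le_pow_left₀ (by positivity) h1 3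
        have h3 : (Real.exp (a*δ₁/3))^3 = Real.exp (a*δ₁) := by
          rw [← Real.exp_nat_mul]
          congr 1
          push_cast
          ring
        rw [h3] at h2
        calc (a*δ₁)^3/27 = (a*δ₁/3)^3 := by ring
          _ ≤ Real.exp (a*δ₁) := h2
      have hE1le : Real.exp (-(a*δ₁)) ≤ 27/(a*δ₁)^3 := by
        rw [Real.exp_neg, inv_le_comm₀ (Real.exp_pos _) (by positivity)]
        rw [inv_div]
        exact hcube
      calc sa*a*Real.exp (-(a*δ₁)) ≤ a*a*Real.exp (-(a*δ₁)) := by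
            apply mul_le_mul_of_nonneg_right
              (mul_le_mul_of_nonneg_right hsa_le_a ha0.le) (Real.exp_pos _).le
        _ ≤ a*a*(27/(a*δ₁)^3) := mul_le_mul_of_nonneg_left hE1le (by positivity)
        _ = 27/(a*δ₁^3) := by
            field_simp [ha0.ne', hδ₁0.ne']
        _ ≤ 27/δ₁^3 := by
            apply div_le_div_of_nonneg_left (by norm_num) (pow_pos hδ₁0 3)
            exact le_mul_of_one_le_left (pow_pos hδ₁0 3).le ha1
        _ = M := hM_def.symm
    have hb2 : Real.exp (-(a*δ₂))/τ ≤ τ ^ (β:ℝ) := by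
      have h1 : (1+β)*L ≤ a*δ₂ := by
        have h2 := mul_le_mul_of_nonneg_right hacL hδ₂0.le
        calc (1+β)*L = (c*δ₂/2)*L := by rw [hδ₂c]
          _ = (c*L/2)*δ₂ := by ring
          _ ≤ a*δ₂ := h2
      have h2 : Real.exp (-(a*δ₂)) ≤ Real.exp (-((1+β)*L)) :=
        Real.exp_le_exp.mpr (by linarith)
      have h3 : Real.exp (-((1+β)*L)) = τ ^ ((1:ℝ)+β) := by
        rw [Real.rpow_def_of_pos hτ0]
        congr 1
        rw [hLlog]; ring
      have h4 : τ ^ ((1:ℝ)+β) = τ * τ ^ (β:ℝ) := by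
        rw [Real.rpow_add hτ0, Real.rpow_one]
      have h5 : Real.exp (-(a*δ₂)) ≤ τ * τ ^ (β:ℝ) := by rw [← h4, ← h3]; exact h2
      calc Real.exp (-(a*δ₂))/τ ≤ (τ * τ ^ (β:ℝ))/τ := (div_le_div_iff_of_pos_right hτ0).mpr h5
        _ = τ ^ (β:ℝ) := mul_div_cancel_left₀ _ hτ0.ne'
    have hτβ : τ ^ (β:ℝ) ≤ ε/(2*K₁) := by
      have h1 : τ ^ (β:ℝ) ≤ (b ^ (1/β : ℝ)) ^ (β:ℝ) :=
        Real.rpow_le_rpow hτ0.le hτb.le hβ0.le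
      have h2 : (b ^ (1/β : ℝ)) ^ (β:ℝ) = b := by
        rw [← Real.rpow_mul hb0.le]
        rw [one_div, inv_mul_cancel₀ hβ0.ne', Real.rpow_one]
      rw [h2] at h1
      exact le_trans h1 (hb_def ▸ min_le_right _ _)
    have hprod : (sa*a*Real.exp (-(a*δ₁))) * (Real.exp (-(a*δ₂))/τ) ≤ M * (ε/(2*K₁)) :=
      mul_le_mul hb1 (le_trans hb2 hτβ)
        (div_nonneg (Real.exp_pos _).le hτ0.le) hM0.le
    calc (6*Real.sqrt 2*σ*Real.exp 1) * ((sa*a*Real.exp (-(a*δ₁))) * (Real.exp (-(a*δ₂))/τ))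
        ≤ (6*Real.sqrt 2*σ*Real.exp 1) * (M * (ε/(2*K₁))) :=
          mul_le_mul_of_nonneg_left hprod (by positivity)
      _ = K₁ * (ε/(2*K₁)) := by rw [hK₁_def]; ring
      _ = ε/2 := by field_simp
  have hT2 : |y| * (Cw*(Real.exp a/a^2))*a/Real.exp (a-1) ≤ ε/2 := by
    have hEa : Real.exp a = Real.exp 1 * Real.exp (a-1) := by
      rw [← Real.exp_add]; congr 1; ring
    have hfact : |y| * (Cw*(Real.exp a/a^2))*a/Real.exp (a-1) = K₂/sa := by
      rw [hyabs, hEa, hK₂_def, ← hsaa]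
      field_simp
    rw [hfact]
    have h5 : (2*K₂/ε)^2 ≤ a := le_trans (hA_def ▸ le_max_right _ _) haA.le
    have h6 : 2*K₂/ε ≤ sa := by
      rw [hsa_def]
      rw [show (2*K₂/ε) = Real.sqrt ((2*K₂/ε)^2) from (Real.sqrt_sq (by positivity)).symm]
      exact Real.sqrt_le_sqrt h5
    calc K₂/sa ≤ K₂/(2*K₂/ε) :=
          div_le_div_of_nonneg_left hK₂0.le (div_pos (by linarith) hε) h6
      _ = ε/2 := by
          rw [div_div_eq_mul_div]
          field_simp [hK₂0.ne']
  calc |hsT σ τ y - y|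
      ≤ |y| * (6 * Real.exp (a*w) / τ + Cw * (Real.exp a / a^2)) / (Real.exp (a-1)/a) := hstep
    _ = |y| * (6*Real.exp (a*w)/τ)*a/Real.exp (a-1)
        + |y| * (Cw*(Real.exp a/a^2))*a/Real.exp (a-1) := hrw
    _ ≤ ε/2 + ε/2 := add_le_add hT1 hT2
    _ = ε := by ring
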